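/- The polynomial PP₁₁(t) = (t+1)²(t+1/2)(t+1/3)(t+1/6)²·t²·(t−1/6)²(t−1/3) is positive definite on S^{47}: for every positive integer m, all points x₁, …, x_m on the unit sphere of EuclideanSpace ℝ (Fin 48), and all reals c₁, …, c_m, one has ∑_{i,j=1}^{m} c_i c_j · PP₁₁(⟨x_i, x_j⟩) ≥ 0. -/

import Mathlib

/-- The eleventh partial product of the Newton form at the `T₂` node multiset. -/
noncomputable def PP11 (t : ℝ) : ℝ :=
  (t + 1) ^ 2 * (t + 1/2) * (t + 1/3) * (t + 1/6) ^ 2 * t ^ 2 *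
    (t - 1/6) ^ 2 * (t - 1/3)

open MvPolynomial Finset

noncomputable section

abbrev P48 := MvPolynomial (Fin 48) ℝ

def ww (α : Fin 48 →₀ ℕ) : ℝ := ∏ i : Fin 48, (Nat.factorial (α i) : ℝ)

lemma ww_pos (α : Fin 48 →₀ ℕ) : 0 < ww α :=
  Finset.prod_pos fun i _ => by exact_mod_cast (Nat.factorial_pos (α i))

def Fb (p q : P48) : ℝ := ∑ α ∈ p.support, ww α * p.coeff α * q.coeff α

lemma Fb_eq_sum {p q : P48} {s : Finset (Fin 48 →₀ ℕ)} (hs : p.support ⊆ s) :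
    Fb p q = ∑ α ∈ s, ww α * p.coeff α * q.coeff α :=
  Finset.sum_subset hs (fun α _ hα => by
    simp [MvPolynomial.notMem_support_iff.mp hα])

lemma Fb_add_left (p₁ p₂ q : P48) : Fb (p₁ + p₂) q = Fb p₁ q + Fb p₂ q := by
  classical
  rw [Fb_eq_sum (s := p₁.support ∪ p₂.support) (MvPolynomial.support_add),
    Fb_eq_sum (s := p₁.support ∪ p₂.support) (subset_union_left),
    Fb_eq_sum (s := p₁.support ∪ p₂.support) (subset_union_right),
    ← Finset.sum_add_distrib]
  exact Finset.sum_congr rfl fun α _ => by rw [MvPolynomial.coeff_add]; ring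

lemma Fb_smul_left (a : ℝ) (p q : P48) : Fb (a • p) q = a * Fb p q := by
  rw [Fb_eq_sum (s := p.support) (MvPolynomial.support_smul), Fb, Finset.mul_sum]
  exact Finset.sum_congr rfl fun α _ => by rw [MvPolynomial.coeff_smul, smul_eq_mul]; ring

lemma Fb_C_mul_left (a : ℝ) (p q : P48) : Fb (C a * p) q = a * Fb p q := by
  rw [← MvPolynomial.smul_eq_C_mul, Fb_smul_left]

lemma Fb_zero_right (p : P48) : Fb p 0 = 0 := by simp [Fb]

lemma Fb_add_right (p q₁ q₂ : P48) : Fb p (q₁ + q₂) = Fb p q₁ + Fb p q₂ := by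
  rw [Fb, Fb, Fb, ← Finset.sum_add_distrib]
  exact Finset.sum_congr rfl fun α _ => by rw [MvPolynomial.coeff_add]; ring

lemma Fb_smul_right (a : ℝ) (p q : P48) : Fb p (a • q) = a * Fb p q := by
  rw [Fb, Fb, Finset.mul_sum]
  exact Finset.sum_congr rfl fun α _ => by rw [MvPolynomial.coeff_smul, smul_eq_mul]; ring

lemma Fb_sum_left {ι : Type*} (s : Finset ι) (f : ι → P48) (q : P48) :
    Fb (∑ i ∈ s, f i) q = ∑ i ∈ s, Fb (f i) q := by
  classical
  induction s using Finset.induction_on with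
  | empty => simp [Fb]
  | insert _ _ h ih => rw [Finset.sum_insert h, Fb_add_left, ih, Finset.sum_insert h]

lemma Fb_sum_right {ι : Type*} (s : Finset ι) (f : ι → P48) (q : P48) :
    Fb q (∑ i ∈ s, f i) = ∑ i ∈ s, Fb q (f i) := by
  classical
  induction s using Finset.induction_on with
  | empty => simp [Fb]
  | insert _ _ h ih => rw [Finset.sum_insert h, Fb_add_right, ih, Finset.sum_insert h]

lemma Fb_self_nonneg (p : P48) : 0 ≤ Fb p p :=
  Finset.sum_nonneg fun α _ => by
    have := ww_pos α
    have : ww α * p.coeff α * p.coeff α = ww α * (p.coeff α * p.coeff α) := by ring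
    rw [this]
    exact mul_nonneg (ww_pos α).le (mul_self_nonneg _)

abbrev E48 := EuclideanSpace ℝ (Fin 48)

lemma Fb_monomial (δ : Fin 48 →₀ ℕ) (b : ℝ) (r : P48) :
    Fb (monomial δ b) r = ww δ * b * r.coeff δ := by
  rw [Fb_eq_sum (s := {δ}) MvPolynomial.support_monomial_subset, Finset.sum_singleton,
    MvPolynomial.coeff_monomial, if_pos rfl]

lemma ww_add_single (i : Fin 48) (β : Fin 48 →₀ ℕ) :
    ww (Finsupp.single i 1 + β) = ((β i : ℝ) + 1) * ww β := by
  unfold ww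
  rw [← Finset.prod_erase_mul _ _ (Finset.mem_univ i),
      ← Finset.prod_erase_mul _ _ (Finset.mem_univ i)]
  have h1 : (Finset.univ.erase i).prod
        (fun j => ((((Finsupp.single i 1 + β : Fin 48 →₀ ℕ)) j).factorial : ℝ))
      = (Finset.univ.erase i).prod (fun j => (((β j).factorial : ℝ))) := by
    apply Finset.prod_congr rfl
    intro j hj
    have hji : ((Finsupp.single i 1 + β : Fin 48 →₀ ℕ)) j = β j := by
      rw [Finsupp.add_apply, Finsupp.single_apply,
        if_neg (fun h => (Finset.mem_erase.mp hj).1 h.symm), zero_add]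
    rw [hji]
  rw [h1]
  have h2 : ((Finsupp.single i 1 + β : Fin 48 →₀ ℕ)) i = β i + 1 := by
    rw [Finsupp.add_apply, Finsupp.single_apply, if_pos rfl]; omega
  rw [h2, Nat.factorial_succ]
  push_cast
  ring

lemma Fb_X_mul (i : Fin 48) (p q : P48) : Fb (X i * p) q = Fb p (pderiv i q) := by
  induction p using MvPolynomial.induction_on' with
  | add p₁ p₂ h1 h2 =>
      rw [mul_add, Fb_add_left, h1, h2, Fb_add_left]
  | monomial β b =>
      induction q using MvPolynomial.induction_on' with
      | add q₁ q₂ h1 h2 => rw [map_add, Fb_add_right, Fb_add_right, h1, h2]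
      | monomial γ c =>
          rw [show X i * monomial β b = monomial (Finsupp.single i 1 + β) b by
            rw [X, monomial_mul, one_mul]]
          rw [Fb_monomial, Fb_monomial, pderiv_monomial]
          rw [MvPolynomial.coeff_monomial, MvPolynomial.coeff_monomial]
          by_cases hγi : γ i = 0
          · have h1 : ¬ (γ = Finsupp.single i 1 + β) := by
              intro h
              rw [h, Finsupp.add_apply, Finsupp.single_apply, if_pos rfl] at hγi
              omega
            rw [if_neg h1]
            by_cases h2 : γ - Finsupp.single i 1 = β
            · rw [if_pos h2, hγi]; push_cast; ring
            · rw [if_neg h2]; ring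
          · have hle : Finsupp.single i 1 ≤ γ := by
              rw [Finsupp.single_le_iff]; omega
            by_cases h : γ = Finsupp.single i 1 + β
            · have h2 : γ - Finsupp.single i 1 = β := by
                rw [h]; exact add_tsub_cancel_left _ _
              rw [if_pos h, if_pos h2, ww_add_single]
              have h3 : γ i = β i + 1 := by
                rw [h, Finsupp.add_apply, Finsupp.single_apply, if_pos rfl]; omega
              rw [h3]; push_cast; ring
            · have h2 : ¬ (γ - Finsupp.single i 1 = β) := by
                intro hh
                exact h (((tsub_add_cancel_of_le hle).symm).trans
                  (by rw [hh]; exact add_comm _ _))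
              rw [if_neg h, if_neg h2]; ring

def SS : P48 := ∑ i : Fin 48, X i * X i
def LL (y : E48) : P48 := ∑ i : Fin 48, C (y i) * X i
def Del (q : P48) : P48 := ∑ i : Fin 48, pderiv i (pderiv i q)
def Dx (x : E48) (q : P48) : P48 := ∑ i : Fin 48, x i • pderiv i q

lemma ww_zero : ww 0 = 1 := by simp [ww]

lemma Fb_one (q : P48) : Fb 1 q = constantCoeff q := by
  have h := Fb_monomial 0 1 q
  rw [ww_zero] at h
  simp only [monomial_zero', map_one] at h
  simpa [constantCoeff_eq] using h

lemma Fb_L_mul (x : E48) (p q : P48) : Fb (LL x * p) q = Fb p (Dx x q) := by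
  rw [LL, Finset.sum_mul, Fb_sum_left, Dx, Fb_sum_right]
  apply Finset.sum_congr rfl
  intro i _
  rw [mul_assoc, Fb_C_mul_left, Fb_X_mul, Fb_smul_right]

lemma Fb_S_mul (p q : P48) : Fb (SS * p) q = Fb p (Del q) := by
  rw [SS, Finset.sum_mul, Fb_sum_left, Del, Fb_sum_right]
  apply Finset.sum_congr rfl
  intro i _
  rw [mul_assoc, Fb_X_mul, Fb_X_mul]

lemma Fb_L_pow (x : E48) (k : ℕ) (q : P48) :
    Fb (LL x ^ k) q = constantCoeff ((Dx x)^[k] q) := by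
  induction k generalizing q with
  | zero => simpa using Fb_one q
  | succ k ih =>
      rw [pow_succ, mul_comm, Fb_L_mul, ih, Function.iterate_succ_apply]

lemma degree_eq_sum_univ (γ : Fin 48 →₀ ℕ) : γ.degree = ∑ i : Fin 48, γ i :=
  Finset.sum_subset (Finset.subset_univ _) (fun i _ h => Finsupp.notMem_support_iff.mp h)

lemma degree_tsub_single (γ : Fin 48 →₀ ℕ) (i : Fin 48) (h : γ i ≠ 0) :
    (Finsupp.degree (γ - Finsupp.single i 1) : ℕ) = γ.degree - 1 := by
  rw [degree_eq_sum_univ, degree_eq_sum_univ,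
    ← Finset.sum_erase_add _ _ (Finset.mem_univ i), ← Finset.sum_erase_add _ _ (Finset.mem_univ i)]
  have h1 : ∀ j ∈ Finset.univ.erase i, ((γ - Finsupp.single i 1 : Fin 48 →₀ ℕ)) j = γ j := by
    intro j hj
    rw [Finsupp.tsub_apply, Finsupp.single_apply, if_neg (fun hh => (Finset.mem_erase.mp hj).1 hh.symm), Nat.sub_zero]
  rw [Finset.sum_congr rfl h1]
  have h2 : ((γ - Finsupp.single i 1 : Fin 48 →₀ ℕ)) i = γ i - 1 := by
    rw [Finsupp.tsub_apply, Finsupp.single_apply, if_pos rfl]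
  rw [h2]
  have h3 : 1 ≤ γ i := Nat.one_le_iff_ne_zero.mpr h
  rw [Nat.add_sub_assoc h3]

lemma pderiv_isHomogeneous {q : P48} {d : ℕ} (i : Fin 48) (hq : q.IsHomogeneous d) :
    (pderiv i q).IsHomogeneous (d - 1) := by
  conv_lhs => rw [as_sum q]
  rw [map_sum]
  apply MvPolynomial.IsHomogeneous.sum
  intro γ hγ
  rw [pderiv_monomial]
  by_cases h : γ i = 0
  · rw [h]
    norm_num
    exact isHomogeneous_zero _ _ _
  · apply isHomogeneous_monomial
    rw [degree_tsub_single γ i h]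
    have hd : γ.degree = d := by
      rw [Finsupp.degree_eq_weight_one]
      exact hq (MvPolynomial.mem_support_iff.mp hγ)
    rw [hd]

lemma euler_mono (γ : Fin 48 →₀ ℕ) (c : ℝ) (x : E48) :
    ∑ i : Fin 48, x i * eval x (pderiv i (monomial γ c)) =
      ((Finsupp.degree γ : ℕ) : ℝ) * eval x (monomial γ c) := by
  rw [degree_eq_sum_univ]
  push_cast
  rw [Finset.sum_mul]
  apply Finset.sum_congr rfl
  intro i _
  rw [pderiv_monomial, eval_monomial, eval_monomial,
    Finsupp.prod_fintype _ _ (fun j => pow_zero _), Finsupp.prod_fintype _ _ (fun j => pow_zero _)]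
  by_cases h : γ i = 0
  · rw [h]; push_cast; ring
  · have h2 : ∀ j ∈ Finset.univ.erase i, x j ^ ((γ - Finsupp.single i 1 : Fin 48 →₀ ℕ)) j
        = x j ^ γ j := by
      intro j hj
      rw [Finsupp.tsub_apply, Finsupp.single_apply,
        if_neg (fun hh => (Finset.mem_erase.mp hj).1 hh.symm), Nat.sub_zero]
    rw [← Finset.prod_erase_mul _ _ (Finset.mem_univ i), ← Finset.prod_erase_mul _ _ (Finset.mem_univ i),
      Finset.prod_congr rfl h2]
    have h3 : ((γ - Finsupp.single i 1 : Fin 48 →₀ ℕ)) i = γ i - 1 := by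
      rw [Finsupp.tsub_apply, Finsupp.single_apply, if_pos rfl]
    rw [h3]
    have h4 : x i ^ γ i = x i ^ (γ i - 1) * x i := by
      conv_lhs => rw [show γ i = (γ i - 1) + 1 by omega]
      rw [pow_succ]
    rw [h4]
    ring

lemma eval_Dx {q : P48} {d : ℕ} (x : E48) (hq : q.IsHomogeneous d) :
    eval x (Dx x q) = d * eval x q := by
  have key : ∀ p : P48, p.IsHomogeneous d →
      ∑ i : Fin 48, x i * eval x (pderiv i p) = d * eval x p := by
    intro p hp
    conv_lhs => rw [as_sum p]
    conv_rhs => rw [as_sum p]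
    simp only [map_sum, Finset.mul_sum]
    rw [Finset.sum_comm]
    apply Finset.sum_congr rfl
    intro γ hγ
    rw [euler_mono]
    have hd : γ.degree = d := by
      rw [Finsupp.degree_eq_weight_one]
      exact hp (MvPolynomial.mem_support_iff.mp hγ)
    rw [hd]
  rw [Dx]
  simp only [map_sum, MvPolynomial.smul_eq_C_mul, map_mul, eval_C]
  exact key q hq

lemma constantCoeff_eq_eval {q : P48} (x : E48) (hq : q.IsHomogeneous 0) :
    constantCoeff q = eval x q := by
  have hsup : q.support ⊆ {0} := by
    intro γ hγ
    have := hq (MvPolynomial.mem_support_iff.mp hγ)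
    rw [Finset.mem_singleton]
    have this : γ.degree = 0 := by rw [Finsupp.degree_eq_weight_one]; exact this
    exact (Finsupp.degree_eq_zero_iff γ).mp this
  have hq2 : q = C (constantCoeff q) := by
    conv_lhs => rw [as_sum q]
    rw [Finset.sum_subset hsup (fun γ _ h => by
      rw [MvPolynomial.notMem_support_iff.mp h, map_zero])]
    simp [constantCoeff_eq]
  calc constantCoeff q = eval x (C (constantCoeff q)) := by rw [eval_C]
  _ = eval x q := by rw [← hq2]

@[simp] lemma pderiv_natCast (i : Fin 48) (n : ℕ) : pderiv i ((n : ℕ) : P48) = 0 := by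
  rw [← map_natCast (C : ℝ →+* P48)]; exact pderiv_C

@[simp] lemma pderiv_ofNat (i : Fin 48) (n : ℕ) [n.AtLeastTwo] :
    pderiv i (OfNat.ofNat n : P48) = 0 := by
  rw [← map_ofNat (C : ℝ →+* P48) n]; exact pderiv_C

@[simp] lemma pderiv_two (i : Fin 48) : pderiv i (2 : P48) = 0 := by
  rw [← map_ofNat (C : ℝ →+* P48) 2]; exact pderiv_C

lemma pderiv_SS (i : Fin 48) : pderiv i SS = 2 * X i := by
  rw [SS, map_sum, Finset.sum_eq_single i]
  · rw [pderiv_mul, pderiv_X_self]; ring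
  · intro j _ hj
    rw [pderiv_mul, pderiv_X_of_ne hj, zero_mul, mul_zero, add_zero]
  · intro h; exact absurd (Finset.mem_univ i) h

lemma pderiv_LL (i : Fin 48) (y : E48) : pderiv i (LL y) = C (y i) := by
  rw [LL, map_sum, Finset.sum_eq_single i]
  · rw [pderiv_C_mul, pderiv_X_self, mul_one]
  · intro j _ hj
    rw [pderiv_C_mul, pderiv_X_of_ne hj, mul_zero]
  · intro h; exact absurd (Finset.mem_univ i) h

lemma sum_XX : ∑ i : Fin 48, X i * X i = SS := rfl
lemma sum_CX (y : E48) : ∑ i : Fin 48, C (y i) * X i = LL y := rfl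
lemma sum_CC (y : E48) (hy : ∑ i : Fin 48, y i * y i = 1) :
    ∑ i : Fin 48, ((C (y i) : P48) * C (y i)) = 1 := by
  rw [← map_one (C : ℝ →+* P48), ← hy, map_sum]
  exact Finset.sum_congr rfl fun i _ => (map_mul _ _ _).symm

lemma card48 : ∑ _i : Fin 48, (1 : P48) = 48 := by simp

lemma Del_main (y : E48) (hy : ∑ i : Fin 48, y i * y i = 1) (j m : ℕ) :
    Del (SS ^ (j+2) * LL y ^ (m+2)) =
      (2*((j:P48)+2)*(2*(j:P48)+2*(m:P48)+54)) * (SS^(j+1) * LL y^(m+2))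
      + (((m:P48)+2)*((m:P48)+1)) * (SS^(j+2) * LL y^m) := by
  have h1 : ∀ i : Fin 48, pderiv i (SS ^ (j+2) * LL y ^ (m+2)) =
      ((j:P48)+2) * SS^(j+1) * (2 * X i) * LL y^(m+2)
      + SS^(j+2) * (((m:P48)+2) * LL y^(m+1) * C (y i)) := by
    intro i
    rw [pderiv_mul, pderiv_pow, pderiv_pow, pderiv_SS, pderiv_LL]
    push_cast
    ring_nf
  have h2 : ∀ i : Fin 48, pderiv i (pderiv i (SS ^ (j+2) * LL y ^ (m+2))) =
      (4*((j:P48)+2)*((j:P48)+1)*SS^j*LL y^(m+2)) * (X i * X i)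
      + (4*((j:P48)+2)*((m:P48)+2)*SS^(j+1)*LL y^(m+1)) * (C (y i) * X i)
      + (((m:P48)+2)*((m:P48)+1)*SS^(j+2)*LL y^m) * (C (y i) * C (y i))
      + (2*((j:P48)+2)*SS^(j+1)*LL y^(m+2)) * 1 := by
    intro i
    rw [h1 i]
    simp only [map_add, pderiv_mul, pderiv_pow, pderiv_SS, pderiv_LL, pderiv_X_self,
      pderiv_natCast, pderiv_ofNat, pderiv_two, pderiv_C, map_ofNat]
    push_cast
    ring_nf
  rw [Del, Finset.sum_congr rfl (fun i _ => h2 i)]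
  simp only [Finset.sum_add_distrib, ← Finset.mul_sum]
  rw [sum_XX, sum_CX, sum_CC y hy, card48]
  ring

lemma Del_L (y : E48) (hy : ∑ i : Fin 48, y i * y i = 1) (m : ℕ) :
    Del (LL y ^ (m+2)) = (((m:P48)+2)*((m:P48)+1)) * LL y ^ m := by
  have h2 : ∀ i : Fin 48, pderiv i (pderiv i (LL y ^ (m+2))) =
      (((m:P48)+2)*((m:P48)+1)*LL y^m) * (C (y i) * C (y i)) := by
    intro i
    simp only [map_add, pderiv_mul, pderiv_pow, pderiv_SS, pderiv_LL, pderiv_X_self,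
      pderiv_natCast, pderiv_ofNat, pderiv_two, pderiv_C, map_ofNat]
    push_cast
    ring_nf
  rw [Del, Finset.sum_congr rfl (fun i _ => h2 i), ← Finset.mul_sum, sum_CC y hy]
  ring

lemma Del_S (j : ℕ) :
    Del (SS ^ (j+2)) = (2*((j:P48)+2)*(2*(j:P48)+50)) * SS ^ (j+1) := by
  have h2 : ∀ i : Fin 48, pderiv i (pderiv i (SS ^ (j+2))) =
      (4*((j:P48)+2)*((j:P48)+1)*SS^j) * (X i * X i)
      + (2*((j:P48)+2)*SS^(j+1)) * 1 := by
    intro i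
    simp only [map_add, pderiv_mul, pderiv_pow, pderiv_SS, pderiv_LL, pderiv_X_self,
      pderiv_natCast, pderiv_ofNat, pderiv_two, pderiv_C, map_ofNat]
    push_cast
    ring_nf
  rw [Del, Finset.sum_congr rfl (fun i _ => h2 i)]
  simp only [Finset.sum_add_distrib, ← Finset.mul_sum]
  rw [sum_XX, card48]
  ring

lemma Del_SS_only : Del SS = 96 := by
  have h2 : ∀ i : Fin 48, pderiv i (pderiv i SS) = (2:P48) * 1 := by
    intro i
    rw [pderiv_SS]
    simp only [map_add, pderiv_mul, pderiv_X_self, pderiv_two]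
    ring
  rw [Del, Finset.sum_congr rfl (fun i _ => h2 i), ← Finset.mul_sum, card48]
  norm_num

lemma Del_S1L (y : E48) (hy : ∑ i : Fin 48, y i * y i = 1) (m : ℕ) :
    Del (SS * LL y ^ (m+2)) = (2*(2*(m:P48)+52)) * LL y ^ (m+2)
      + (((m:P48)+2)*((m:P48)+1)) * (SS * LL y ^ m) := by
  have h2 : ∀ i : Fin 48, pderiv i (pderiv i (SS * LL y ^ (m+2))) =
      (2*LL y^(m+2)) * 1
      + (4*((m:P48)+2)*LL y^(m+1)) * (C (y i) * X i)
      + (((m:P48)+2)*((m:P48)+1)*SS*LL y^m) * (C (y i) * C (y i)) := by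
    intro i
    simp only [map_add, pderiv_mul, pderiv_pow, pderiv_SS, pderiv_LL, pderiv_X_self,
      pderiv_natCast, pderiv_ofNat, pderiv_two, pderiv_C, map_ofNat]
    push_cast
    ring_nf
  rw [Del, Finset.sum_congr rfl (fun i _ => h2 i)]
  simp only [Finset.sum_add_distrib, ← Finset.mul_sum]
  rw [sum_CX, sum_CC y hy, card48]
  ring

lemma Del_SL1 (y : E48) (j : ℕ) :
    Del (SS ^ (j+2) * LL y) = (2*((j:P48)+2)*(2*(j:P48)+52)) * (SS ^ (j+1) * LL y) := by
  have h2 : ∀ i : Fin 48, pderiv i (pderiv i (SS ^ (j+2) * LL y)) =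
      (4*((j:P48)+2)*((j:P48)+1)*SS^j*LL y) * (X i * X i)
      + (4*((j:P48)+2)*SS^(j+1)) * (C (y i) * X i)
      + (2*((j:P48)+2)*SS^(j+1)*LL y) * 1 := by
    intro i
    simp only [map_add, pderiv_mul, pderiv_pow, pderiv_SS, pderiv_LL, pderiv_X_self,
      pderiv_natCast, pderiv_ofNat, pderiv_two, pderiv_C, map_ofNat]
    push_cast
    ring_nf
  rw [Del, Finset.sum_congr rfl (fun i _ => h2 i)]
  simp only [Finset.sum_add_distrib, ← Finset.mul_sum]
  rw [sum_XX, sum_CX, card48]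
  ring

lemma Del_S1L1 (y : E48) : Del (SS * LL y) = 100 * LL y := by
  have h2 : ∀ i : Fin 48, pderiv i (pderiv i (SS * LL y)) =
      (2*LL y) * 1 + (4:P48) * (C (y i) * X i) := by
    intro i
    simp only [map_add, pderiv_mul, pderiv_pow, pderiv_SS, pderiv_LL, pderiv_X_self,
      pderiv_natCast, pderiv_ofNat, pderiv_two, pderiv_C, map_ofNat]
    push_cast
    ring_nf
  rw [Del, Finset.sum_congr rfl (fun i _ => h2 i)]
  simp only [Finset.sum_add_distrib, ← Finset.mul_sum]
  rw [sum_CX, card48]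
  ring

lemma Del_L1 (y : E48) : Del (LL y) = 0 := by
  have h2 : ∀ i : Fin 48, pderiv i (pderiv i (LL y)) = 0 := by
    intro i
    rw [pderiv_LL, pderiv_C]
  rw [Del, Finset.sum_congr rfl (fun i _ => h2 i)]
  simp

lemma Del_one : Del (1 : P48) = 0 := by
  rw [Del]
  simp [pderiv_one]

lemma Del_add (p q : P48) : Del (p + q) = Del p + Del q := by
  rw [Del, Del, Del, ← Finset.sum_add_distrib]
  exact Finset.sum_congr rfl fun i _ => by rw [map_add, map_add]

lemma Del_C_mul (a : ℝ) (p : P48) : Del (C a * p) = C a * Del p := by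
  rw [Del, Del, Finset.mul_sum]
  exact Finset.sum_congr rfl fun i _ => by rw [pderiv_C_mul, pderiv_C_mul]

lemma Dx_isHomogeneous {q : P48} {d : ℕ} (x : E48) (hq : q.IsHomogeneous d) :
    (Dx x q).IsHomogeneous (d - 1) := by
  rw [Dx]
  apply MvPolynomial.IsHomogeneous.sum
  intro i _
  rw [MvPolynomial.smul_eq_C_mul]
  simpa using (isHomogeneous_C _ (x i)).mul (pderiv_isHomogeneous i hq)

lemma constCoeff_Dx_iter (x : E48) : ∀ (k : ℕ) (q : P48), q.IsHomogeneous k →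
    constantCoeff ((Dx x)^[k] q) = (k.factorial : ℝ) * eval x q := by
  intro k
  induction k with
  | zero => intro q hq; simpa using (constantCoeff_eq_eval x hq)
  | succ k ih =>
      intro q hq
      have hd : (Dx x q).IsHomogeneous k := by
        simpa using Dx_isHomogeneous x hq
      rw [Function.iterate_succ_apply, ih _ hd, eval_Dx x hq, Nat.factorial_succ]
      push_cast
      ring

lemma Fb_harmonic_eval (x : E48) (k : ℕ) (a : ℝ) (p q r : P48)
    (hp : p = C a * LL x ^ k + SS * r) (hq : Del q = 0) (hhom : q.IsHomogeneous k) :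
    Fb p q = a * ((k.factorial : ℝ) * eval x q) := by
  rw [hp, Fb_add_left, Fb_C_mul_left, Fb_S_mul, hq, Fb_zero_right, add_zero,
    Fb_L_pow, constCoeff_Dx_iter x k q hhom]

lemma kernel_of_gram (m : ℕ) (c : Fin m → ℝ) (H : Fin m → P48)
    (g : Fin m → Fin m → ℝ) (κ : ℝ) (hκ : 0 < κ)
    (hFb : ∀ i j, Fb (H i) (H j) = κ * g i j) :
    0 ≤ ∑ i : Fin m, ∑ j : Fin m, c i * c j * g i j := by
  have h0 : 0 ≤ Fb (∑ i : Fin m, c i • H i) (∑ i : Fin m, c i • H i) :=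
    Fb_self_nonneg _
  rw [Fb_sum_left] at h0
  have h1 : ∀ i : Fin m, Fb (c i • H i) (∑ j : Fin m, c j • H j)
      = κ * ∑ j : Fin m, c i * c j * g i j := by
    intro i
    rw [Fb_smul_left, Fb_sum_right, Finset.mul_sum, Finset.mul_sum]
    apply Finset.sum_congr rfl
    intro j _
    rw [Fb_smul_right, hFb i j]
    ring
  rw [Finset.sum_congr rfl (fun i _ => h1 i), ← Finset.mul_sum] at h0
  by_contra hS
  push_neg at hS
  exact absurd h0 (not_le.mpr (mul_neg_of_pos_of_neg hκ hS))

lemma SS_hom : SS.IsHomogeneous 2 := by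
  apply MvPolynomial.IsHomogeneous.sum
  intro i _
  simpa using (isHomogeneous_X ℝ i).mul (isHomogeneous_X ℝ i)

lemma LL_hom (y : E48) : (LL y).IsHomogeneous 1 := by
  apply MvPolynomial.IsHomogeneous.sum
  intro i _
  simpa using ((isHomogeneous_C (Fin 48) (y i) : (C (y i) : P48).IsHomogeneous 0).mul
    (isHomogeneous_X ℝ i))

lemma hom_congr {p : P48} {m n : ℕ} (h : m = n) (hp : p.IsHomogeneous m) :
    p.IsHomogeneous n := h ▸ hp

lemma eval_SS (x : E48) (hx : ∑ i : Fin 48, x i * x i = 1) : eval x SS = 1 := by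
  rw [SS, map_sum]
  simp only [map_mul, eval_X]
  exact hx

lemma eval_LL (x y : E48) : eval x (LL y) = ∑ i : Fin 48, y i * x i := by
  rw [LL, map_sum]
  simp only [map_mul, eval_C, eval_X]

def hP0 (y : E48) : P48 := (1 : P48)

lemma harm0 (y : E48) : Del (hP0 y) = 0 := by
  rw [hP0]; exact Del_one

lemma hom0 (y : E48) : (hP0 y).IsHomogeneous 0 := by
  rw [hP0]; exact isHomogeneous_one _ _

lemma split0 (x : E48) : hP0 x = C 1 * LL x ^ 0 + SS * 0 := by
  rw [hP0, map_one]; ring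

lemma evalh0 (u v : E48) : eval u (hP0 v) = 1 := by
  rw [hP0]; simp

lemma ker0 (m : ℕ) (x : Fin m → E48) (hx : ∀ i, ∑ l : Fin 48, x i l * x i l = 1)
    (c : Fin m → ℝ) (t : Fin m → Fin m → ℝ)
    (ht : ∀ i j, t i j = ∑ l : Fin 48, x j l * x i l) :
    0 ≤ ∑ i : Fin m, ∑ j : Fin m, c i * c j * ((1 : ℝ)) := by
  apply kernel_of_gram m c (fun i => hP0 (x i)) _ ((1 : ℝ) * (Nat.factorial 0 : ℝ))
    (by norm_num [Nat.factorial])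
  intro i j
  rw [Fb_harmonic_eval (x i) 0 1 _ _ _ (split0 (x i)) (harm0 (x j)) (hom0 (x j)),
    evalh0 (x i) (x j)]
  ring

def hP1 (y : E48) : P48 := LL y

lemma harm1 (y : E48) : Del (hP1 y) = 0 := by
  rw [hP1]; exact Del_L1 y

lemma hom1 (y : E48) : (hP1 y).IsHomogeneous 1 := by
  rw [hP1]; exact LL_hom y

lemma split1 (x : E48) : hP1 x = C 1 * LL x ^ 1 + SS * 0 := by
  rw [hP1, map_one]; ring

lemma evalh1 (u v : E48) : eval u (hP1 v) = (∑ l : Fin 48, v l * u l) := by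
  rw [hP1]; exact eval_LL u v

lemma ker1 (m : ℕ) (x : Fin m → E48) (hx : ∀ i, ∑ l : Fin 48, x i l * x i l = 1)
    (c : Fin m → ℝ) (t : Fin m → Fin m → ℝ)
    (ht : ∀ i j, t i j = ∑ l : Fin 48, x j l * x i l) :
    0 ≤ ∑ i : Fin m, ∑ j : Fin m, c i * c j * ((1 : ℝ) * t i j) := by
  apply kernel_of_gram m c (fun i => hP1 (x i)) _ ((1 : ℝ) * (Nat.factorial 1 : ℝ))
    (by norm_num [Nat.factorial])
  intro i j
  rw [ht i j,
    Fb_harmonic_eval (x i) 1 1 _ _ _ (split1 (x i)) (harm1 (x j)) (hom1 (x j)),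
    evalh1 (x i) (x j)]
  ring

def hP2 (y : E48) : P48 :=
    C 48 * (LL y ^ 2)
    + C (-1) * (SS)

lemma harm2 (y : E48) (hy : ∑ i : Fin 48, y i * y i = 1) :
    Del (hP2 y) = 0 := by
  have d0 := Del_L y hy 0
  have d1 := Del_SS_only
  norm_num at d0
  rw [hP2]
  simp only [Del_add, Del_C_mul]
  rw [d0, d1]
  simp only [map_neg, map_ofNat, map_one]
  ring

lemma hom2 (y : E48) : (hP2 y).IsHomogeneous 2 := by
  rw [hP2]
  exact ((hom_congr (by norm_num) ((isHomogeneous_C (Fin 48) _).mul ((LL_hom y).pow 2))).add (hom_congr (by norm_num) ((isHomogeneous_C (Fin 48) _).mul SS_hom)))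

lemma split2 (x : E48) : hP2 x = C 48 * LL x ^ 2 + SS * (C (-1) * ((1 : P48))) := by
  rw [hP2]; ring

lemma evalh2 (u v : E48) (hu : ∑ i : Fin 48, u i * u i = 1) :
    eval u (hP2 v) = (48 : ℝ) * (∑ l : Fin 48, v l * u l) ^ 2 + (-1 : ℝ) := by
  rw [hP2]
  simp only [map_add, map_mul, map_pow, eval_C]
  rw [eval_SS u hu, eval_LL]
  ring

lemma ker2 (m : ℕ) (x : Fin m → E48) (hx : ∀ i, ∑ l : Fin 48, x i l * x i l = 1)
    (c : Fin m → ℝ) (t : Fin m → Fin m → ℝ)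
    (ht : ∀ i j, t i j = ∑ l : Fin 48, x j l * x i l) :
    0 ≤ ∑ i : Fin m, ∑ j : Fin m, c i * c j * ((48 : ℝ) * t i j ^ 2 + (-1 : ℝ)) := by
  apply kernel_of_gram m c (fun i => hP2 (x i)) _ ((48 : ℝ) * (Nat.factorial 2 : ℝ))
    (by norm_num [Nat.factorial])
  intro i j
  rw [ht i j,
    Fb_harmonic_eval (x i) 2 48 _ _ _ (split2 (x i)) (harm2 (x j) (hx j)) (hom2 (x j)),
    evalh2 (x i) (x j) (hx i)]
  ring

def hP3 (y : E48) : P48 :=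
    C 50 * (LL y ^ 3)
    + C (-3) * (SS * LL y)

lemma harm3 (y : E48) (hy : ∑ i : Fin 48, y i * y i = 1) :
    Del (hP3 y) = 0 := by
  have d0 := Del_L y hy 1
  have d1 := Del_S1L1 y
  norm_num at d0
  rw [hP3]
  simp only [Del_add, Del_C_mul]
  rw [d0, d1]
  simp only [map_neg, map_ofNat, map_one]
  ring

lemma hom3 (y : E48) : (hP3 y).IsHomogeneous 3 := by
  rw [hP3]
  exact ((hom_congr (by norm_num) ((isHomogeneous_C (Fin 48) _).mul ((LL_hom y).pow 3))).add (hom_congr (by norm_num) ((isHomogeneous_C (Fin 48) _).mul (SS_hom.mul (LL_hom y)))))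

lemma split3 (x : E48) : hP3 x = C 50 * LL x ^ 3 + SS * (C (-3) * (LL x)) := by
  rw [hP3]; ring

lemma evalh3 (u v : E48) (hu : ∑ i : Fin 48, u i * u i = 1) :
    eval u (hP3 v) = (50 : ℝ) * (∑ l : Fin 48, v l * u l) ^ 3 + (-3 : ℝ) * (∑ l : Fin 48, v l * u l) := by
  rw [hP3]
  simp only [map_add, map_mul, map_pow, eval_C]
  rw [eval_SS u hu, eval_LL]
  ring

lemma ker3 (m : ℕ) (x : Fin m → E48) (hx : ∀ i, ∑ l : Fin 48, x i l * x i l = 1)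
    (c : Fin m → ℝ) (t : Fin m → Fin m → ℝ)
    (ht : ∀ i j, t i j = ∑ l : Fin 48, x j l * x i l) :
    0 ≤ ∑ i : Fin m, ∑ j : Fin m, c i * c j * ((50 : ℝ) * t i j ^ 3 + (-3 : ℝ) * t i j) := by
  apply kernel_of_gram m c (fun i => hP3 (x i)) _ ((50 : ℝ) * (Nat.factorial 3 : ℝ))
    (by norm_num [Nat.factorial])
  intro i j
  rw [ht i j,
    Fb_harmonic_eval (x i) 3 50 _ _ _ (split3 (x i)) (harm3 (x j) (hx j)) (hom3 (x j)),
    evalh3 (x i) (x j) (hx i)]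
  ring

def hP4 (y : E48) : P48 :=
    C 2600 * (LL y ^ 4)
    + C (-300) * (SS * LL y ^ 2)
    + C 3 * (SS ^ 2)

lemma harm4 (y : E48) (hy : ∑ i : Fin 48, y i * y i = 1) :
    Del (hP4 y) = 0 := by
  have d0 := Del_L y hy 2
  have d1 := Del_S1L y hy 0
  have d2 := Del_S 0
  norm_num at d0 d1 d2
  rw [hP4]
  simp only [Del_add, Del_C_mul]
  rw [d0, d1, d2]
  simp only [map_neg, map_ofNat, map_one]
  ring

lemma hom4 (y : E48) : (hP4 y).IsHomogeneous 4 := by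
  rw [hP4]
  exact (((hom_congr (by norm_num) ((isHomogeneous_C (Fin 48) _).mul ((LL_hom y).pow 4))).add (hom_congr (by norm_num) ((isHomogeneous_C (Fin 48) _).mul (SS_hom.mul ((LL_hom y).pow 2))))).add (hom_congr (by norm_num) ((isHomogeneous_C (Fin 48) _).mul (SS_hom.pow 2))))

lemma split4 (x : E48) : hP4 x = C 2600 * LL x ^ 4 + SS * (C (-300) * (LL x ^ 2) + C 3 * (SS)) := by
  rw [hP4]; ring

lemma evalh4 (u v : E48) (hu : ∑ i : Fin 48, u i * u i = 1) :
    eval u (hP4 v) = (2600 : ℝ) * (∑ l : Fin 48, v l * u l) ^ 4 + (-300 : ℝ) * (∑ l : Fin 48, v l * u l) ^ 2 + (3 : ℝ) := by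
  rw [hP4]
  simp only [map_add, map_mul, map_pow, eval_C]
  rw [eval_SS u hu, eval_LL]
  ring

lemma ker4 (m : ℕ) (x : Fin m → E48) (hx : ∀ i, ∑ l : Fin 48, x i l * x i l = 1)
    (c : Fin m → ℝ) (t : Fin m → Fin m → ℝ)
    (ht : ∀ i j, t i j = ∑ l : Fin 48, x j l * x i l) :
    0 ≤ ∑ i : Fin m, ∑ j : Fin m, c i * c j * ((2600 : ℝ) * t i j ^ 4 + (-300 : ℝ) * t i j ^ 2 + (3 : ℝ)) := by
  apply kernel_of_gram m c (fun i => hP4 (x i)) _ ((2600 : ℝ) * (Nat.factorial 4 : ℝ))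
    (by norm_num [Nat.factorial])
  intro i j
  rw [ht i j,
    Fb_harmonic_eval (x i) 4 2600 _ _ _ (split4 (x i)) (harm4 (x j) (hx j)) (hom4 (x j)),
    evalh4 (x i) (x j) (hx i)]
  ring

def hP5 (y : E48) : P48 :=
    C 2808 * (LL y ^ 5)
    + C (-520) * (SS * LL y ^ 3)
    + C 15 * (SS ^ 2 * LL y)

lemma harm5 (y : E48) (hy : ∑ i : Fin 48, y i * y i = 1) :
    Del (hP5 y) = 0 := by
  have d0 := Del_L y hy 3
  have d1 := Del_S1L y hy 1
  have d2 := Del_SL1 y 0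
  norm_num at d0 d1 d2
  rw [hP5]
  simp only [Del_add, Del_C_mul]
  rw [d0, d1, d2]
  simp only [map_neg, map_ofNat, map_one]
  ring

lemma hom5 (y : E48) : (hP5 y).IsHomogeneous 5 := by
  rw [hP5]
  exact (((hom_congr (by norm_num) ((isHomogeneous_C (Fin 48) _).mul ((LL_hom y).pow 5))).add (hom_congr (by norm_num) ((isHomogeneous_C (Fin 48) _).mul (SS_hom.mul ((LL_hom y).pow 3))))).add (hom_congr (by norm_num) ((isHomogeneous_C (Fin 48) _).mul ((SS_hom.pow 2).mul (LL_hom y)))))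

lemma split5 (x : E48) : hP5 x = C 2808 * LL x ^ 5 + SS * (C (-520) * (LL x ^ 3) + C 15 * (SS * LL x)) := by
  rw [hP5]; ring

lemma evalh5 (u v : E48) (hu : ∑ i : Fin 48, u i * u i = 1) :
    eval u (hP5 v) = (2808 : ℝ) * (∑ l : Fin 48, v l * u l) ^ 5 + (-520 : ℝ) * (∑ l : Fin 48, v l * u l) ^ 3 + (15 : ℝ) * (∑ l : Fin 48, v l * u l) := by
  rw [hP5]
  simp only [map_add, map_mul, map_pow, eval_C]
  rw [eval_SS u hu, eval_LL]
  ring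

lemma ker5 (m : ℕ) (x : Fin m → E48) (hx : ∀ i, ∑ l : Fin 48, x i l * x i l = 1)
    (c : Fin m → ℝ) (t : Fin m → Fin m → ℝ)
    (ht : ∀ i j, t i j = ∑ l : Fin 48, x j l * x i l) :
    0 ≤ ∑ i : Fin m, ∑ j : Fin m, c i * c j * ((2808 : ℝ) * t i j ^ 5 + (-520 : ℝ) * t i j ^ 3 + (15 : ℝ) * t i j) := by
  apply kernel_of_gram m c (fun i => hP5 (x i)) _ ((2808 : ℝ) * (Nat.factorial 5 : ℝ))
    (by norm_num [Nat.factorial])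
  intro i j
  rw [ht i j,
    Fb_harmonic_eval (x i) 5 2808 _ _ _ (split5 (x i)) (harm5 (x j) (hx j)) (hom5 (x j)),
    evalh5 (x i) (x j) (hx i)]
  ring

def hP6 (y : E48) : P48 :=
    C 52416 * (LL y ^ 6)
    + C (-14040) * (SS * LL y ^ 4)
    + C 780 * (SS ^ 2 * LL y ^ 2)
    + C (-5) * (SS ^ 3)

lemma harm6 (y : E48) (hy : ∑ i : Fin 48, y i * y i = 1) :
    Del (hP6 y) = 0 := by
  have d0 := Del_L y hy 4
  have d1 := Del_S1L y hy 2
  have d2 := Del_main y hy 0 0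
  have d3 := Del_S 1
  norm_num at d0 d1 d2 d3
  rw [hP6]
  simp only [Del_add, Del_C_mul]
  rw [d0, d1, d2, d3]
  simp only [map_neg, map_ofNat, map_one]
  ring

lemma hom6 (y : E48) : (hP6 y).IsHomogeneous 6 := by
  rw [hP6]
  exact ((((hom_congr (by norm_num) ((isHomogeneous_C (Fin 48) _).mul ((LL_hom y).pow 6))).add (hom_congr (by norm_num) ((isHomogeneous_C (Fin 48) _).mul (SS_hom.mul ((LL_hom y).pow 4))))).add (hom_congr (by norm_num) ((isHomogeneous_C (Fin 48) _).mul ((SS_hom.pow 2).mul ((LL_hom y).pow 2))))).add (hom_congr (by norm_num) ((isHomogeneous_C (Fin 48) _).mul (SS_hom.pow 3))))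

lemma split6 (x : E48) : hP6 x = C 52416 * LL x ^ 6 + SS * (C (-14040) * (LL x ^ 4) + C 780 * (SS * LL x ^ 2) + C (-5) * (SS ^ 2)) := by
  rw [hP6]; ring

lemma evalh6 (u v : E48) (hu : ∑ i : Fin 48, u i * u i = 1) :
    eval u (hP6 v) = (52416 : ℝ) * (∑ l : Fin 48, v l * u l) ^ 6 + (-14040 : ℝ) * (∑ l : Fin 48, v l * u l) ^ 4 + (780 : ℝ) * (∑ l : Fin 48, v l * u l) ^ 2 + (-5 : ℝ) := by
  rw [hP6]
  simp only [map_add, map_mul, map_pow, eval_C]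
  rw [eval_SS u hu, eval_LL]
  ring

lemma ker6 (m : ℕ) (x : Fin m → E48) (hx : ∀ i, ∑ l : Fin 48, x i l * x i l = 1)
    (c : Fin m → ℝ) (t : Fin m → Fin m → ℝ)
    (ht : ∀ i j, t i j = ∑ l : Fin 48, x j l * x i l) :
    0 ≤ ∑ i : Fin m, ∑ j : Fin m, c i * c j * ((52416 : ℝ) * t i j ^ 6 + (-14040 : ℝ) * t i j ^ 4 + (780 : ℝ) * t i j ^ 2 + (-5 : ℝ)) := by
  apply kernel_of_gram m c (fun i => hP6 (x i)) _ ((52416 : ℝ) * (Nat.factorial 6 : ℝ))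
    (by norm_num [Nat.factorial])
  intro i j
  rw [ht i j,
    Fb_harmonic_eval (x i) 6 52416 _ _ _ (split6 (x i)) (harm6 (x j) (hx j)) (hom6 (x j)),
    evalh6 (x i) (x j) (hx i)]
  ring

def hP7 (y : E48) : P48 :=
    C 8352 * (LL y ^ 7)
    + C (-3024) * (SS * LL y ^ 5)
    + C 270 * (SS ^ 2 * LL y ^ 3)
    + C (-5) * (SS ^ 3 * LL y)

lemma harm7 (y : E48) (hy : ∑ i : Fin 48, y i * y i = 1) :
    Del (hP7 y) = 0 := by
  have d0 := Del_L y hy 5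
  have d1 := Del_S1L y hy 3
  have d2 := Del_main y hy 0 1
  have d3 := Del_SL1 y 1
  norm_num at d0 d1 d2 d3
  rw [hP7]
  simp only [Del_add, Del_C_mul]
  rw [d0, d1, d2, d3]
  simp only [map_neg, map_ofNat, map_one]
  ring

lemma hom7 (y : E48) : (hP7 y).IsHomogeneous 7 := by
  rw [hP7]
  exact ((((hom_congr (by norm_num) ((isHomogeneous_C (Fin 48) _).mul ((LL_hom y).pow 7))).add (hom_congr (by norm_num) ((isHomogeneous_C (Fin 48) _).mul (SS_hom.mul ((LL_hom y).pow 5))))).add (hom_congr (by norm_num) ((isHomogeneous_C (Fin 48) _).mul ((SS_hom.pow 2).mul ((LL_hom y).pow 3))))).add (hom_congr (by norm_num) ((isHomogeneous_C (Fin 48) _).mul ((SS_hom.pow 3).mul (LL_hom y)))))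

lemma split7 (x : E48) : hP7 x = C 8352 * LL x ^ 7 + SS * (C (-3024) * (LL x ^ 5) + C 270 * (SS * LL x ^ 3) + C (-5) * (SS ^ 2 * LL x)) := by
  rw [hP7]; ring

lemma evalh7 (u v : E48) (hu : ∑ i : Fin 48, u i * u i = 1) :
    eval u (hP7 v) = (8352 : ℝ) * (∑ l : Fin 48, v l * u l) ^ 7 + (-3024 : ℝ) * (∑ l : Fin 48, v l * u l) ^ 5 + (270 : ℝ) * (∑ l : Fin 48, v l * u l) ^ 3 + (-5 : ℝ) * (∑ l : Fin 48, v l * u l) := by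
  rw [hP7]
  simp only [map_add, map_mul, map_pow, eval_C]
  rw [eval_SS u hu, eval_LL]
  ring

lemma ker7 (m : ℕ) (x : Fin m → E48) (hx : ∀ i, ∑ l : Fin 48, x i l * x i l = 1)
    (c : Fin m → ℝ) (t : Fin m → Fin m → ℝ)
    (ht : ∀ i j, t i j = ∑ l : Fin 48, x j l * x i l) :
    0 ≤ ∑ i : Fin m, ∑ j : Fin m, c i * c j * ((8352 : ℝ) * t i j ^ 7 + (-3024 : ℝ) * t i j ^ 5 + (270 : ℝ) * t i j ^ 3 + (-5 : ℝ) * t i j) := by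
  apply kernel_of_gram m c (fun i => hP7 (x i)) _ ((8352 : ℝ) * (Nat.factorial 7 : ℝ))
    (by norm_num [Nat.factorial])
  intro i j
  rw [ht i j,
    Fb_harmonic_eval (x i) 7 8352 _ _ _ (split7 (x i)) (harm7 (x j) (hx j)) (hom7 (x j)),
    evalh7 (x i) (x j) (hx i)]
  ring

def hP8 (y : E48) : P48 :=
    C 501120 * (LL y ^ 8)
    + C (-233856) * (SS * LL y ^ 6)
    + C 30240 * (SS ^ 2 * LL y ^ 4)
    + C (-1080) * (SS ^ 3 * LL y ^ 2)
    + C 5 * (SS ^ 4)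

lemma harm8 (y : E48) (hy : ∑ i : Fin 48, y i * y i = 1) :
    Del (hP8 y) = 0 := by
  have d0 := Del_L y hy 6
  have d1 := Del_S1L y hy 4
  have d2 := Del_main y hy 0 2
  have d3 := Del_main y hy 1 0
  have d4 := Del_S 2
  norm_num at d0 d1 d2 d3 d4
  rw [hP8]
  simp only [Del_add, Del_C_mul]
  rw [d0, d1, d2, d3, d4]
  simp only [map_neg, map_ofNat, map_one]
  ring

lemma hom8 (y : E48) : (hP8 y).IsHomogeneous 8 := by
  rw [hP8]
  exact (((((hom_congr (by norm_num) ((isHomogeneous_C (Fin 48) _).mul ((LL_hom y).pow 8))).add (hom_congr (by norm_num) ((isHomogeneous_C (Fin 48) _).mul (SS_hom.mul ((LL_hom y).pow 6))))).add (hom_congr (by norm_num) ((isHomogeneous_C (Fin 48) _).mul ((SS_hom.pow 2).mul ((LL_hom y).pow 4))))).add (hom_congr (by norm_num) ((isHomogeneous_C (Fin 48) _).mul ((SS_hom.pow 3).mul ((LL_hom y).pow 2))))).add (hom_congr (by norm_num) ((isHomogeneous_C (Fin 48) _).mul (SS_hom.pow 4))))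

lemma split8 (x : E48) : hP8 x = C 501120 * LL x ^ 8 + SS * (C (-233856) * (LL x ^ 6) + C 30240 * (SS * LL x ^ 4) + C (-1080) * (SS ^ 2 * LL x ^ 2) + C 5 * (SS ^ 3)) := by
  rw [hP8]; ring

lemma evalh8 (u v : E48) (hu : ∑ i : Fin 48, u i * u i = 1) :
    eval u (hP8 v) = (501120 : ℝ) * (∑ l : Fin 48, v l * u l) ^ 8 + (-233856 : ℝ) * (∑ l : Fin 48, v l * u l) ^ 6 + (30240 : ℝ) * (∑ l : Fin 48, v l * u l) ^ 4 + (-1080 : ℝ) * (∑ l : Fin 48, v l * u l) ^ 2 + (5 : ℝ) := by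
  rw [hP8]
  simp only [map_add, map_mul, map_pow, eval_C]
  rw [eval_SS u hu, eval_LL]
  ring

lemma ker8 (m : ℕ) (x : Fin m → E48) (hx : ∀ i, ∑ l : Fin 48, x i l * x i l = 1)
    (c : Fin m → ℝ) (t : Fin m → Fin m → ℝ)
    (ht : ∀ i j, t i j = ∑ l : Fin 48, x j l * x i l) :
    0 ≤ ∑ i : Fin m, ∑ j : Fin m, c i * c j * ((501120 : ℝ) * t i j ^ 8 + (-233856 : ℝ) * t i j ^ 6 + (30240 : ℝ) * t i j ^ 4 + (-1080 : ℝ) * t i j ^ 2 + (5 : ℝ)) := by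
  apply kernel_of_gram m c (fun i => hP8 (x i)) _ ((501120 : ℝ) * (Nat.factorial 8 : ℝ))
    (by norm_num [Nat.factorial])
  intro i j
  rw [ht i j,
    Fb_harmonic_eval (x i) 8 501120 _ _ _ (split8 (x i)) (harm8 (x j) (hx j)) (hom8 (x j)),
    evalh8 (x i) (x j) (hx i)]
  ring

def hP9 (y : E48) : P48 :=
    C 575360 * (LL y ^ 9)
    + C (-334080) * (SS * LL y ^ 7)
    + C 58464 * (SS ^ 2 * LL y ^ 5)
    + C (-3360) * (SS ^ 3 * LL y ^ 3)
    + C 45 * (SS ^ 4 * LL y)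

lemma harm9 (y : E48) (hy : ∑ i : Fin 48, y i * y i = 1) :
    Del (hP9 y) = 0 := by
  have d0 := Del_L y hy 7
  have d1 := Del_S1L y hy 5
  have d2 := Del_main y hy 0 3
  have d3 := Del_main y hy 1 1
  have d4 := Del_SL1 y 2
  norm_num at d0 d1 d2 d3 d4
  rw [hP9]
  simp only [Del_add, Del_C_mul]
  rw [d0, d1, d2, d3, d4]
  simp only [map_neg, map_ofNat, map_one]
  ring

lemma hom9 (y : E48) : (hP9 y).IsHomogeneous 9 := by
  rw [hP9]
  exact (((((hom_congr (by norm_num) ((isHomogeneous_C (Fin 48) _).mul ((LL_hom y).pow 9))).add (hom_congr (by norm_num) ((isHomogeneous_C (Fin 48) _).mul (SS_hom.mul ((LL_hom y).pow 7))))).add (hom_congr (by norm_num) ((isHomogeneous_C (Fin 48) _).mul ((SS_hom.pow 2).mul ((LL_hom y).pow 5))))).add (hom_congr (by norm_num) ((isHomogeneous_C (Fin 48) _).mul ((SS_hom.pow 3).mul ((LL_hom y).pow 3))))).add (hom_congr (by norm_num) ((isHomogeneous_C (Fin 48) _).mul ((SS_hom.pow 4).mul (LL_hom y)))))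

lemma split9 (x : E48) : hP9 x = C 575360 * LL x ^ 9 + SS * (C (-334080) * (LL x ^ 7) + C 58464 * (SS * LL x ^ 5) + C (-3360) * (SS ^ 2 * LL x ^ 3) + C 45 * (SS ^ 3 * LL x)) := by
  rw [hP9]; ring

lemma evalh9 (u v : E48) (hu : ∑ i : Fin 48, u i * u i = 1) :
    eval u (hP9 v) = (575360 : ℝ) * (∑ l : Fin 48, v l * u l) ^ 9 + (-334080 : ℝ) * (∑ l : Fin 48, v l * u l) ^ 7 + (58464 : ℝ) * (∑ l : Fin 48, v l * u l) ^ 5 + (-3360 : ℝ) * (∑ l : Fin 48, v l * u l) ^ 3 + (45 : ℝ) * (∑ l : Fin 48, v l * u l) := by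
  rw [hP9]
  simp only [map_add, map_mul, map_pow, eval_C]
  rw [eval_SS u hu, eval_LL]
  ring

lemma ker9 (m : ℕ) (x : Fin m → E48) (hx : ∀ i, ∑ l : Fin 48, x i l * x i l = 1)
    (c : Fin m → ℝ) (t : Fin m → Fin m → ℝ)
    (ht : ∀ i j, t i j = ∑ l : Fin 48, x j l * x i l) :
    0 ≤ ∑ i : Fin m, ∑ j : Fin m, c i * c j * ((575360 : ℝ) * t i j ^ 9 + (-334080 : ℝ) * t i j ^ 7 + (58464 : ℝ) * t i j ^ 5 + (-3360 : ℝ) * t i j ^ 3 + (45 : ℝ) * t i j) := by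
  apply kernel_of_gram m c (fun i => hP9 (x i)) _ ((575360 : ℝ) * (Nat.factorial 9 : ℝ))
    (by norm_num [Nat.factorial])
  intro i j
  rw [ht i j,
    Fb_harmonic_eval (x i) 9 575360 _ _ _ (split9 (x i)) (harm9 (x j) (hx j)) (hom9 (x j)),
    evalh9 (x i) (x j) (hx i)]
  ring

def hP10 (y : E48) : P48 :=
    C 7364608 * (LL y ^ 10)
    + C (-5178240) * (SS * LL y ^ 8)
    + C 1169280 * (SS ^ 2 * LL y ^ 6)
    + C (-97440) * (SS ^ 3 * LL y ^ 4)
    + C 2520 * (SS ^ 4 * LL y ^ 2)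
    + C (-9) * (SS ^ 5)

lemma harm10 (y : E48) (hy : ∑ i : Fin 48, y i * y i = 1) :
    Del (hP10 y) = 0 := by
  have d0 := Del_L y hy 8
  have d1 := Del_S1L y hy 6
  have d2 := Del_main y hy 0 4
  have d3 := Del_main y hy 1 2
  have d4 := Del_main y hy 2 0
  have d5 := Del_S 3
  norm_num at d0 d1 d2 d3 d4 d5
  rw [hP10]
  simp only [Del_add, Del_C_mul]
  rw [d0, d1, d2, d3, d4, d5]
  simp only [map_neg, map_ofNat, map_one]
  ring

lemma hom10 (y : E48) : (hP10 y).IsHomogeneous 10 := by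
  rw [hP10]
  exact ((((((hom_congr (by norm_num) ((isHomogeneous_C (Fin 48) _).mul ((LL_hom y).pow 10))).add (hom_congr (by norm_num) ((isHomogeneous_C (Fin 48) _).mul (SS_hom.mul ((LL_hom y).pow 8))))).add (hom_congr (by norm_num) ((isHomogeneous_C (Fin 48) _).mul ((SS_hom.pow 2).mul ((LL_hom y).pow 6))))).add (hom_congr (by norm_num) ((isHomogeneous_C (Fin 48) _).mul ((SS_hom.pow 3).mul ((LL_hom y).pow 4))))).add (hom_congr (by norm_num) ((isHomogeneous_C (Fin 48) _).mul ((SS_hom.pow 4).mul ((LL_hom y).pow 2))))).add (hom_congr (by norm_num) ((isHomogeneous_C (Fin 48) _).mul (SS_hom.pow 5))))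

lemma split10 (x : E48) : hP10 x = C 7364608 * LL x ^ 10 + SS * (C (-5178240) * (LL x ^ 8) + C 1169280 * (SS * LL x ^ 6) + C (-97440) * (SS ^ 2 * LL x ^ 4) + C 2520 * (SS ^ 3 * LL x ^ 2) + C (-9) * (SS ^ 4)) := by
  rw [hP10]; ring

lemma evalh10 (u v : E48) (hu : ∑ i : Fin 48, u i * u i = 1) :
    eval u (hP10 v) = (7364608 : ℝ) * (∑ l : Fin 48, v l * u l) ^ 10 + (-5178240 : ℝ) * (∑ l : Fin 48, v l * u l) ^ 8 + (1169280 : ℝ) * (∑ l : Fin 48, v l * u l) ^ 6 + (-97440 : ℝ) * (∑ l : Fin 48, v l * u l) ^ 4 + (2520 : ℝ) * (∑ l : Fin 48, v l * u l) ^ 2 + (-9 : ℝ) := by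
  rw [hP10]
  simp only [map_add, map_mul, map_pow, eval_C]
  rw [eval_SS u hu, eval_LL]
  ring

lemma ker10 (m : ℕ) (x : Fin m → E48) (hx : ∀ i, ∑ l : Fin 48, x i l * x i l = 1)
    (c : Fin m → ℝ) (t : Fin m → Fin m → ℝ)
    (ht : ∀ i j, t i j = ∑ l : Fin 48, x j l * x i l) :
    0 ≤ ∑ i : Fin m, ∑ j : Fin m, c i * c j * ((7364608 : ℝ) * t i j ^ 10 + (-5178240 : ℝ) * t i j ^ 8 + (1169280 : ℝ) * t i j ^ 6 + (-97440 : ℝ) * t i j ^ 4 + (2520 : ℝ) * t i j ^ 2 + (-9 : ℝ)) := by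
  apply kernel_of_gram m c (fun i => hP10 (x i)) _ ((7364608 : ℝ) * (Nat.factorial 10 : ℝ))
    (by norm_num [Nat.factorial])
  intro i j
  rw [ht i j,
    Fb_harmonic_eval (x i) 10 7364608 _ _ _ (split10 (x i)) (harm10 (x j) (hx j)) (hom10 (x j)),
    evalh10 (x i) (x j) (hx i)]
  ring

def hP11 (y : E48) : P48 :=
    C 5523456 * (LL y ^ 11)
    + C (-4602880) * (SS * LL y ^ 9)
    + C 1294560 * (SS ^ 2 * LL y ^ 7)
    + C (-146160) * (SS ^ 3 * LL y ^ 5)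
    + C 6090 * (SS ^ 4 * LL y ^ 3)
    + C (-63) * (SS ^ 5 * LL y)

lemma harm11 (y : E48) (hy : ∑ i : Fin 48, y i * y i = 1) :
    Del (hP11 y) = 0 := by
  have d0 := Del_L y hy 9
  have d1 := Del_S1L y hy 7
  have d2 := Del_main y hy 0 5
  have d3 := Del_main y hy 1 3
  have d4 := Del_main y hy 2 1
  have d5 := Del_SL1 y 3
  norm_num at d0 d1 d2 d3 d4 d5
  rw [hP11]
  simp only [Del_add, Del_C_mul]
  rw [d0, d1, d2, d3, d4, d5]
  simp only [map_neg, map_ofNat, map_one]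
  ring

lemma hom11 (y : E48) : (hP11 y).IsHomogeneous 11 := by
  rw [hP11]
  exact ((((((hom_congr (by norm_num) ((isHomogeneous_C (Fin 48) _).mul ((LL_hom y).pow 11))).add (hom_congr (by norm_num) ((isHomogeneous_C (Fin 48) _).mul (SS_hom.mul ((LL_hom y).pow 9))))).add (hom_congr (by norm_num) ((isHomogeneous_C (Fin 48) _).mul ((SS_hom.pow 2).mul ((LL_hom y).pow 7))))).add (hom_congr (by norm_num) ((isHomogeneous_C (Fin 48) _).mul ((SS_hom.pow 3).mul ((LL_hom y).pow 5))))).add (hom_congr (by norm_num) ((isHomogeneous_C (Fin 48) _).mul ((SS_hom.pow 4).mul ((LL_hom y).pow 3))))).add (hom_congr (by norm_num) ((isHomogeneous_C (Fin 48) _).mul ((SS_hom.pow 5).mul (LL_hom y)))))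

lemma split11 (x : E48) : hP11 x = C 5523456 * LL x ^ 11 + SS * (C (-4602880) * (LL x ^ 9) + C 1294560 * (SS * LL x ^ 7) + C (-146160) * (SS ^ 2 * LL x ^ 5) + C 6090 * (SS ^ 3 * LL x ^ 3) + C (-63) * (SS ^ 4 * LL x)) := by
  rw [hP11]; ring

lemma evalh11 (u v : E48) (hu : ∑ i : Fin 48, u i * u i = 1) :
    eval u (hP11 v) = (5523456 : ℝ) * (∑ l : Fin 48, v l * u l) ^ 11 + (-4602880 : ℝ) * (∑ l : Fin 48, v l * u l) ^ 9 + (1294560 : ℝ) * (∑ l : Fin 48, v l * u l) ^ 7 + (-146160 : ℝ) * (∑ l : Fin 48, v l * u l) ^ 5 + (6090 : ℝ) * (∑ l : Fin 48, v l * u l) ^ 3 + (-63 : ℝ) * (∑ l : Fin 48, v l * u l) := by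
  rw [hP11]
  simp only [map_add, map_mul, map_pow, eval_C]
  rw [eval_SS u hu, eval_LL]
  ring

lemma ker11 (m : ℕ) (x : Fin m → E48) (hx : ∀ i, ∑ l : Fin 48, x i l * x i l = 1)
    (c : Fin m → ℝ) (t : Fin m → Fin m → ℝ)
    (ht : ∀ i j, t i j = ∑ l : Fin 48, x j l * x i l) :
    0 ≤ ∑ i : Fin m, ∑ j : Fin m, c i * c j * ((5523456 : ℝ) * t i j ^ 11 + (-4602880 : ℝ) * t i j ^ 9 + (1294560 : ℝ) * t i j ^ 7 + (-146160 : ℝ) * t i j ^ 5 + (6090 : ℝ) * t i j ^ 3 + (-63 : ℝ) * t i j) := by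
  apply kernel_of_gram m c (fun i => hP11 (x i)) _ ((5523456 : ℝ) * (Nat.factorial 11 : ℝ))
    (by norm_num [Nat.factorial])
  intro i j
  rw [ht i j,
    Fb_harmonic_eval (x i) 11 5523456 _ _ _ (split11 (x i)) (harm11 (x j) (hx j)) (hom11 (x j)),
    evalh11 (x i) (x j) (hx i)]
  ring

theorem PP11_T2_positive_definite (m : ℕ) (hm : 1 ≤ m)
    (x : Fin m → EuclideanSpace ℝ (Fin 48)) (hx : ∀ i, ‖x i‖ = 1)
    (c : Fin m → ℝ) :
    0 ≤ ∑ i : Fin m, ∑ j : Fin m, c i * c j * PP11 (inner ℝ (x i) (x j) : ℝ) := by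
  have hx2 : ∀ i, ∑ l : Fin 48, x i l * x i l = 1 := by
    intro i
    have h1 : (inner ℝ (x i) (x i) : ℝ) = 1 := by
      rw [real_inner_self_eq_norm_mul_norm, hx i]; norm_num
    rw [PiLp.inner_apply] at h1
    simpa [RCLike.inner_apply, sq] using h1
  have ht : ∀ i j, (inner ℝ (x i) (x j) : ℝ) = ∑ l : Fin 48, x j l * x i l := by
    intro i j
    rw [real_inner_comm, PiLp.inner_apply]
    simp [RCLike.inner_apply, mul_comm]
  have K0 := ker0 m x hx2 c (fun i j => (inner ℝ (x i) (x j) : ℝ)) ht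
  have K1 := ker1 m x hx2 c (fun i j => (inner ℝ (x i) (x j) : ℝ)) ht
  have K2 := ker2 m x hx2 c (fun i j => (inner ℝ (x i) (x j) : ℝ)) ht
  have K3 := ker3 m x hx2 c (fun i j => (inner ℝ (x i) (x j) : ℝ)) ht
  have K4 := ker4 m x hx2 c (fun i j => (inner ℝ (x i) (x j) : ℝ)) ht
  have K5 := ker5 m x hx2 c (fun i j => (inner ℝ (x i) (x j) : ℝ)) ht
  have K6 := ker6 m x hx2 c (fun i j => (inner ℝ (x i) (x j) : ℝ)) ht
  have K7 := ker7 m x hx2 c (fun i j => (inner ℝ (x i) (x j) : ℝ)) ht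
  have K8 := ker8 m x hx2 c (fun i j => (inner ℝ (x i) (x j) : ℝ)) ht
  have K9 := ker9 m x hx2 c (fun i j => (inner ℝ (x i) (x j) : ℝ)) ht
  have K10 := ker10 m x hx2 c (fun i j => (inner ℝ (x i) (x j) : ℝ)) ht
  have K11 := ker11 m x hx2 c (fun i j => (inner ℝ (x i) (x j) : ℝ)) ht
  have expand : ∀ i j : Fin m, c i * c j * PP11 (inner ℝ (x i) (x j) : ℝ) =
      ((511 : ℝ)/181958400) * (c i * c j * ((1 : ℝ)))
      +
      ((40103 : ℝ)/586310400) * (c i * c j * ((1 : ℝ) * ((inner ℝ (x i) (x j) : ℝ))))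
      +
      ((6979 : ℝ)/422143488) * (c i * c j * ((48 : ℝ) * ((inner ℝ (x i) (x j) : ℝ)) ^ 2 + (-1 : ℝ)))
      +
      ((857549 : ℝ)/7306329600) * (c i * c j * ((50 : ℝ) * ((inner ℝ (x i) (x j) : ℝ)) ^ 3 + (-3 : ℝ) * ((inner ℝ (x i) (x j) : ℝ))))
      +
      ((1188979 : ℝ)/98500147200) * (c i * c j * ((2600 : ℝ) * ((inner ℝ (x i) (x j) : ℝ)) ^ 4 + (-300 : ℝ) * ((inner ℝ (x i) (x j) : ℝ)) ^ 2 + (3 : ℝ)))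
      +
      ((13305061 : ℝ)/294445082880) * (c i * c j * ((2808 : ℝ) * ((inner ℝ (x i) (x j) : ℝ)) ^ 5 + (-520 : ℝ) * ((inner ℝ (x i) (x j) : ℝ)) ^ 3 + (15 : ℝ) * ((inner ℝ (x i) (x j) : ℝ))))
      +
      ((5897 : ℝ)/779950080) * (c i * c j * ((52416 : ℝ) * ((inner ℝ (x i) (x j) : ℝ)) ^ 6 + (-14040 : ℝ) * ((inner ℝ (x i) (x j) : ℝ)) ^ 4 + (780 : ℝ) * ((inner ℝ (x i) (x j) : ℝ)) ^ 2 + (-5 : ℝ)))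
      +
      ((17635 : ℝ)/149133312) * (c i * c j * ((8352 : ℝ) * ((inner ℝ (x i) (x j) : ℝ)) ^ 7 + (-3024 : ℝ) * ((inner ℝ (x i) (x j) : ℝ)) ^ 5 + (270 : ℝ) * ((inner ℝ (x i) (x j) : ℝ)) ^ 3 + (-5 : ℝ) * ((inner ℝ (x i) (x j) : ℝ))))
      +
      ((707 : ℝ)/192430080) * (c i * c j * ((501120 : ℝ) * ((inner ℝ (x i) (x j) : ℝ)) ^ 8 + (-233856 : ℝ) * ((inner ℝ (x i) (x j) : ℝ)) ^ 6 + (30240 : ℝ) * ((inner ℝ (x i) (x j) : ℝ)) ^ 4 + (-1080 : ℝ) * ((inner ℝ (x i) (x j) : ℝ)) ^ 2 + (5 : ℝ)))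
      +
      ((1 : ℝ)/215760) * (c i * c j * ((575360 : ℝ) * ((inner ℝ (x i) (x j) : ℝ)) ^ 9 + (-334080 : ℝ) * ((inner ℝ (x i) (x j) : ℝ)) ^ 7 + (58464 : ℝ) * ((inner ℝ (x i) (x j) : ℝ)) ^ 5 + (-3360 : ℝ) * ((inner ℝ (x i) (x j) : ℝ)) ^ 3 + (45 : ℝ) * ((inner ℝ (x i) (x j) : ℝ))))
      +
      ((5 : ℝ)/14729216) * (c i * c j * ((7364608 : ℝ) * ((inner ℝ (x i) (x j) : ℝ)) ^ 10 + (-5178240 : ℝ) * ((inner ℝ (x i) (x j) : ℝ)) ^ 8 + (1169280 : ℝ) * ((inner ℝ (x i) (x j) : ℝ)) ^ 6 + (-97440 : ℝ) * ((inner ℝ (x i) (x j) : ℝ)) ^ 4 + (2520 : ℝ) * ((inner ℝ (x i) (x j) : ℝ)) ^ 2 + (-9 : ℝ)))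
      +
      ((1 : ℝ)/5523456) * (c i * c j * ((5523456 : ℝ) * ((inner ℝ (x i) (x j) : ℝ)) ^ 11 + (-4602880 : ℝ) * ((inner ℝ (x i) (x j) : ℝ)) ^ 9 + (1294560 : ℝ) * ((inner ℝ (x i) (x j) : ℝ)) ^ 7 + (-146160 : ℝ) * ((inner ℝ (x i) (x j) : ℝ)) ^ 5 + (6090 : ℝ) * ((inner ℝ (x i) (x j) : ℝ)) ^ 3 + (-63 : ℝ) * ((inner ℝ (x i) (x j) : ℝ))))
      := by
    intro i j
    rw [PP11]
    ring
  rw [Finset.sum_congr rfl (fun i _ => Finset.sum_congr rfl (fun j _ => expand i j))]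
  simp only [Finset.sum_add_distrib, ← Finset.mul_sum]
  linarith [K0, K1, K2, K3, K4, K5, K6, K7, K8, K9, K10, K11]

end
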